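/- The language L = { ā^{n₁} b̄^{m₁} s a^{n₂} b^{m₂} : n₁ ≥ n₂ ≥ 0, m₁ ≥ m₂ ≥ 0 } over the five-letter alphabet {ā, b̄, s, a, b} is not context-free. -/

import Mathlib

/-- The five-letter alphabet {ā, b̄, s, a, b}. -/
inductive Ab5 where
  | abar | bbar | sep | a | b
deriving DecidableEq

/-- The language { ā^{n₁} b̄^{m₁} s a^{n₂} b^{m₂} : n₁ ≥ n₂ ≥ 0, m₁ ≥ m₂ ≥ 0 }. -/
def L5 : Language Ab5 :=
  {w | ∃ n1 m1 n2 m2 : ℕ, n2 ≤ n1 ∧ m2 ≤ m1 ∧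
    w = List.replicate n1 Ab5.abar ++ List.replicate m1 Ab5.bbar ++ [Ab5.sep] ++
        List.replicate n2 Ab5.a ++ List.replicate m2 Ab5.b}



namespace CFPump
variable {T : Type}

inductive PTree (T N : Type) where
  | leaf (t : T)
  | node (A : N) (c : List (PTree T N))

namespace PTree
variable {N : Type}

mutual
def yield : PTree T N → List T
  | .leaf t => [t]
  | .node _ c => yieldF c
def yieldF : List (PTree T N) → List T
  | [] => []
  | t :: ts => t.yield ++ yieldF ts
end

mutual
def size : PTree T N → ℕ
  | .leaf _ => 1
  | .node _ c => sizeF c + 1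
def sizeF : List (PTree T N) → ℕ
  | [] => 0
  | t :: ts => t.size + sizeF ts
end

mutual
def depth : PTree T N → ℕ
  | .leaf _ => 0
  | .node _ c => depthF c + 1
def depthF : List (PTree T N) → ℕ
  | [] => 0
  | t :: ts => max t.depth (depthF ts)
end

def root : PTree T N → Symbol T N
  | .leaf t => .terminal t
  | .node A _ => .nonterminal A

lemma yieldF_append (c1 c2 : List (PTree T N)) :
    yieldF (c1 ++ c2) = yieldF c1 ++ yieldF c2 := by
  induction c1 with
  | nil => simp [yieldF]
  | cons t ts ih => simp [yieldF, ih]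

lemma sizeF_append (c1 c2 : List (PTree T N)) :
    sizeF (c1 ++ c2) = sizeF c1 + sizeF c2 := by
  induction c1 with
  | nil => simp [sizeF]
  | cons t ts ih => simp [sizeF, ih]; omega


lemma depth_le_depthF {t : PTree T N} {c : List (PTree T N)} (h : t ∈ c) :
    t.depth ≤ depthF c := by
  induction c with
  | nil => simp at h
  | cons s ss ih =>
    rcases List.mem_cons.1 h with h | h
    · subst h; simp [depthF]
    · exact le_trans (ih h) (by simp [depthF])

lemma size_pos (t : PTree T N) : 1 ≤ t.size := by
  cases t <;> simp [size] <;> omega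

lemma size_le_sizeF {t : PTree T N} {c : List (PTree T N)} (h : t ∈ c) :
    t.size ≤ sizeF c := by
  induction c with
  | nil => simp at h
  | cons s ss ih =>
    rcases List.mem_cons.1 h with h | h
    · subst h; simp [sizeF]
    · have := ih h; simp [sizeF]; omega

lemma exists_attain : ∀ (c : List (PTree T N)), c ≠ [] → ∃ t ∈ c, depthF c ≤ t.depth := by
  intro c hc
  induction c with
  | nil => simp at hc
  | cons t ts ih =>
    rcases eq_or_ne ts [] with rfl | hne
    · exact ⟨t, by simp, by simp [depthF]⟩
    · obtain ⟨s, hs, hds⟩ := ih hne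
      by_cases h : t.depth ≤ depthF ts
      · exact ⟨s, by simp [hs], by simp [depthF]; omega⟩
      · exact ⟨t, by simp, by simp [depthF]; omega⟩

end PTree

open ContextFreeGrammar

variable {g : ContextFreeGrammar.{0} T}

/-- Validity of a parse tree w.r.t. a grammar. -/
inductive PTree.Valid (g : ContextFreeGrammar.{0} T) : PTree T g.NT → Prop where
  | leaf (t : T) : Valid g (.leaf t)
  | node (r : ContextFreeRule T g.NT) (hr : r ∈ g.rules) (c : List (PTree T g.NT))
      (hroots : c.map PTree.root = r.output)
      (hc : ∀ t ∈ c, Valid g t) : Valid g (.node r.input c)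

lemma forest_derives {c : List (PTree T g.NT)}
    (h : ∀ t ∈ c, g.Derives [t.root] (List.map Symbol.terminal t.yield)) :
    g.Derives (c.map PTree.root) (List.map Symbol.terminal (PTree.yieldF c)) := by
  induction c with
  | nil => simp [PTree.yieldF]; rfl
  | cons t ts ih =>
    simp only [List.map_cons, PTree.yieldF, List.map_append]
    have h1 : g.Derives ([t.root] ++ ts.map PTree.root)
        (List.map Symbol.terminal t.yield ++ ts.map PTree.root) :=
      (h t (by simp)).append_right _
    exact h1.trans ((ih (fun s hs => h s (by simp [hs]))).append_left _)

lemma PTree.Valid.derives {t : PTree T g.NT} (h : t.Valid g) :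
    g.Derives [t.root] (List.map Symbol.terminal t.yield) := by
  induction h with
  | leaf t => simp [PTree.root, PTree.yield]; rfl
  | node r hr c hroots hc ih =>
    have h1 : g.Produces [PTree.root (.node r.input c)] (c.map PTree.root) := by
      refine ⟨r, hr, ?_⟩
      rw [hroots]
      exact (ContextFreeRule.Rewrites.input_output (r := r))
    exact h1.trans_derives (forest_derives ih)

lemma derives_to_forest {u : List (Symbol T g.NT)} {z : List T}
    (h : g.Derives u (List.map Symbol.terminal z)) :
    ∃ c : List (PTree T g.NT), c.map PTree.root = u ∧ PTree.yieldF c = z ∧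
      ∀ t ∈ c, t.Valid g := by
  induction h using Relation.ReflTransGen.head_induction_on with
  | refl =>
    refine ⟨z.map .leaf, ?_, ?_, ?_⟩
    · simp [PTree.root]
    · induction z with
      | nil => rfl
      | cons a l ih => simpa [PTree.yieldF, PTree.yield] using ih
    · intro t ht
      simp only [List.mem_map] at ht
      obtain ⟨a, -, rfl⟩ := ht
      exact .leaf a
  | head hprod hder ih =>
    obtain ⟨c, hroots, hyield, hvalid⟩ := ih
    obtain ⟨r, hr, hrw⟩ := hprod
    obtain ⟨p, q, hu, hv⟩ := hrw.exists_parts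
    rw [hv, List.append_assoc] at hroots
    obtain ⟨c1, c23, hc, hc1, hc23⟩ := List.map_eq_append_iff.1 hroots
    obtain ⟨c2, c3, hc', hc2, hc3⟩ := List.map_eq_append_iff.1 hc23
    subst hc hc'
    refine ⟨c1 ++ [PTree.node r.input c2] ++ c3, ?_, ?_, ?_⟩
    · simp only [List.map_append, hc1, hc3, hu, List.map_cons, List.map_nil, PTree.root]
    · rw [← hyield]
      simp [PTree.yieldF_append, PTree.yieldF, PTree.yield]
    · intro t ht
      simp only [List.append_assoc, List.mem_append, List.mem_cons] at ht
      rcases ht with h | h | h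
      · exact hvalid t (by simp [h])
      · rcases h with rfl | h
        · exact .node r hr c2 hc2 (fun s hs => hvalid s (by simp [hs]))
        · simp at h
      · exact hvalid t (by simp [h])

noncomputable def nts (g : ContextFreeGrammar.{0} T) : Finset g.NT :=
  haveI := Classical.decEq g.NT
  insert g.initial (g.rules.biUnion fun r => {r.input})

lemma root_mem_nts {t : PTree T g.NT} (hv : t.Valid g) {A : g.NT}
    (hr : t.root = Symbol.nonterminal A) : A ∈ nts g := by
  unfold nts
  letI := Classical.decEq g.NT
  cases t with
  | leaf t => simp [PTree.root] at hr
  | node B c =>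
    simp only [PTree.root, Symbol.nonterminal.injEq] at hr
    subst hr
    cases hv with
    | node r hrul c hroots hc =>
      exact Finset.mem_insert_of_mem (Finset.mem_biUnion.2 ⟨r, hrul, by simp⟩)

noncomputable def mlen (g : ContextFreeGrammar.{0} T) : ℕ :=
  haveI := Classical.decEq (ContextFreeRule T g.NT)
  (g.rules.sup fun r => r.output.length) + 1

lemma output_len_lt {r : ContextFreeRule T g.NT} (hr : r ∈ g.rules) :
    r.output.length < mlen g := by
  haveI := Classical.decEq (ContextFreeRule T g.NT)
  exact Nat.lt_succ_of_le (Finset.le_sup (f := fun r => r.output.length) hr)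

lemma yieldF_len_le {c : List (PTree T g.NT)} {B : ℕ}
    (h : ∀ t ∈ c, (PTree.yield t).length ≤ B) :
    (PTree.yieldF c).length ≤ c.length * B := by
  induction c with
  | nil => simp [PTree.yieldF]
  | cons t ts ih =>
    simp only [PTree.yieldF, List.length_append, List.length_cons]
    have h1 := h t (by simp)
    have h2 := ih (fun s hs => h s (by simp [hs]))
    nlinarith

lemma yield_len_le_pow_depth {t : PTree T g.NT} (hv : t.Valid g) :
    (PTree.yield t).length ≤ mlen g ^ t.depth := by
  induction hv with
  | leaf t => simp [PTree.yield, PTree.depth]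
  | node r hr c hroots hc ih =>
    have hM : 1 ≤ mlen g := by simp [mlen]
    have hlen : c.length ≤ mlen g := by
      have h1 := output_len_lt hr
      have h2 : c.length = r.output.length := by rw [← hroots, List.length_map]
      omega
    have hb : ∀ t ∈ c, (PTree.yield t).length ≤ mlen g ^ PTree.depthF c := by
      intro t ht
      exact le_trans (ih t ht) (Nat.pow_le_pow_right hM (PTree.depth_le_depthF ht))
    calc (PTree.yield (PTree.node r.input c)).length
        = (PTree.yieldF c).length := rfl
      _ ≤ c.length * mlen g ^ PTree.depthF c := yieldF_len_le hb
      _ ≤ mlen g * mlen g ^ PTree.depthF c := Nat.mul_le_mul_right _ hlen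
      _ = mlen g ^ (PTree.depth (PTree.node r.input c)) := by rw [PTree.depth]; ring

/-! ### The spine -/

def stepD : PTree T g.NT → PTree T g.NT
  | .leaf t => .leaf t
  | .node A c => (c.find? fun t => decide (PTree.depthF c ≤ t.depth)).getD (.node A c)

def spine (n : ℕ) (t : PTree T g.NT) : PTree T g.NT := stepD^[n] t

/-- A one-hole context package. -/
def CtxOK (g : ContextFreeGrammar.{0} T) (Φ : PTree T g.NT → PTree T g.NT)
    (B C : g.NT) (u v : List T) (t tc : PTree T g.NT) : Prop :=
  ∀ s, s.root = Symbol.nonterminal C → s.Valid g →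
    (Φ s).Valid g ∧ (Φ s).root = Symbol.nonterminal B ∧
    (Φ s).yield = u ++ s.yield ++ v ∧ (Φ s).size + tc.size = t.size + s.size

lemma step_spec {t : PTree T g.NT} {B : g.NT} (hv : t.Valid g)
    (hroot : t.root = Symbol.nonterminal B) (hd : 2 ≤ t.depth) :
    ∃ C u v Φ, (stepD t).Valid g ∧ (stepD t).root = Symbol.nonterminal C ∧
      (stepD t).depth + 1 = t.depth ∧
      t.yield = u ++ (stepD t).yield ++ v ∧
      g.Derives [Symbol.nonterminal B]
        (u.map Symbol.terminal ++ [Symbol.nonterminal C] ++ v.map Symbol.terminal) ∧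
      CtxOK g Φ B C u v t (stepD t) ∧ (stepD t).size + 1 ≤ t.size := by
  cases t with
  | leaf t => simp [PTree.depth] at hd
  | node B' c =>
    simp only [PTree.root, Symbol.nonterminal.injEq] at hroot
    subst hroot
    have hdF : 1 ≤ PTree.depthF c := by simp [PTree.depth] at hd; omega
    have hcne : c ≠ [] := by rintro rfl; simp [PTree.depthF] at hdF
    obtain ⟨t', ht'c, ht'd⟩ := PTree.exists_attain c hcne
    have hfind : ∃ t'', (c.find? fun t => decide (PTree.depthF c ≤ t.depth)) = some t'' := by
      rw [← Option.isSome_iff_exists]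
      rw [List.find?_isSome]
      exact ⟨t', ht'c, by simpa using ht'd⟩
    obtain ⟨t'', hfind⟩ := hfind
    have ht''c : t'' ∈ c := List.mem_of_find?_eq_some hfind
    have ht''d : PTree.depthF c ≤ t''.depth := by simpa using List.find?_some hfind
    have hstep : stepD (PTree.node B' c) = t'' := by simp [stepD, hfind]
    have hdepth : t''.depth = PTree.depthF c :=
      le_antisymm (PTree.depth_le_depthF ht''c) ht''d
    cases hv with
    | node r hr c hroots hc =>
    obtain ⟨c1, c2, hsplit⟩ := List.append_of_mem ht''c
    -- t'' is a node
    obtain ⟨C, c', rfl⟩ : ∃ C c', t'' = PTree.node C c' := by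
      cases t'' with
      | leaf x => simp [PTree.depth] at hdepth; omega
      | node C c' => exact ⟨C, c', rfl⟩
    refine ⟨C, PTree.yieldF c1, PTree.yieldF c2, fun s => PTree.node r.input (c1 ++ s :: c2),
      ?_, ?_, ?_, ?_, ?_, ?_, ?_⟩
    · rw [hstep]; exact hc _ ht''c
    · rw [hstep]; rfl
    · rw [hstep, hdepth]; rfl
    · rw [hstep]
      show PTree.yieldF c = _
      rw [hsplit]
      rw [show c1 ++ (PTree.node C c') :: c2 = c1 ++ [PTree.node C c'] ++ c2 by simp]
      simp [PTree.yieldF_append, PTree.yieldF, PTree.yield]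
    · -- the derivation
      have hprod : g.Produces [Symbol.nonterminal r.input] r.output :=
        ⟨r, hr, ContextFreeRule.Rewrites.input_output⟩
      have hout : r.output = c1.map PTree.root ++ [Symbol.nonterminal C] ++ c2.map PTree.root := by
        rw [← hroots, hsplit]; simp [PTree.root]
      have hder1 : g.Derives (c1.map PTree.root)
          (List.map Symbol.terminal (PTree.yieldF c1)) :=
        forest_derives (fun s hs => (hc s (by rw [hsplit]; simp [hs])).derives)
      have hder2 : g.Derives (c2.map PTree.root)
          (List.map Symbol.terminal (PTree.yieldF c2)) :=
        forest_derives (fun s hs => (hc s (by rw [hsplit]; simp [hs])).derives)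
      refine hprod.trans_derives ?_
      rw [hout]
      have h1 := hder1.append_right ([Symbol.nonterminal C] ++ List.map PTree.root c2)
      have h2 := (hder2.append_left [Symbol.nonterminal C]).append_left
        (List.map Symbol.terminal (PTree.yieldF c1))
      simp only [List.append_assoc]
      exact h1.trans h2
    · -- CtxOK
      intro s hsroot hsval
      have hmap : (c1 ++ s :: c2).map PTree.root = r.output := by
        rw [← hroots, hsplit]
        simp only [List.map_append, List.map_cons]
        rw [hsroot]
        simp [PTree.root]
      refine ⟨?_, rfl, ?_, ?_⟩
      · refine .node r hr _ hmap ?_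
        intro x hx
        rcases List.mem_append.1 hx with h | h
        · exact hc x (by rw [hsplit]; simp [h])
        · rcases List.mem_cons.1 h with rfl | h
          · exact hsval
          · exact hc x (by rw [hsplit]; simp [h])
      · show PTree.yieldF (c1 ++ s :: c2) = _
        rw [show c1 ++ s :: c2 = c1 ++ [s] ++ c2 by simp]
        simp [PTree.yieldF_append, PTree.yieldF, PTree.yield]
      · rw [hstep]
        show PTree.sizeF (c1 ++ s :: c2) + 1 + _ = PTree.sizeF c + 1 + _
        rw [hsplit]
        rw [show c1 ++ s :: c2 = c1 ++ [s] ++ c2 by simp,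
            show c1 ++ (PTree.node C c') :: c2 = c1 ++ [PTree.node C c'] ++ c2 by simp]
        simp [PTree.sizeF_append, PTree.sizeF]
        omega
    · rw [hstep]
      show _ + 1 ≤ PTree.sizeF c + 1
      exact Nat.add_le_add_right (PTree.size_le_sizeF ht''c) 1


lemma ctxOK_id (B : g.NT) (t : PTree T g.NT) (hroot : t.root = Symbol.nonterminal B) :
    CtxOK g id B B [] [] t t := by
  intro s hs hv
  exact ⟨hv, hs, by simp, by simp [Nat.add_comm]⟩

lemma ctxOK_comp {Φ1 Φ2 : PTree T g.NT → PTree T g.NT} {B C D : g.NT}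
    {u1 v1 u2 v2 : List T} {t t1 t2 : PTree T g.NT}
    (h1 : CtxOK g Φ1 B C u1 v1 t t1) (h2 : CtxOK g Φ2 C D u2 v2 t1 t2) :
    CtxOK g (Φ1 ∘ Φ2) B D (u1 ++ u2) (v2 ++ v1) t t2 := by
  intro s hs hv
  simp only [Function.comp_apply]
  obtain ⟨hval2, hroot2, hyield2, hsize2⟩ := h2 s hs hv
  obtain ⟨hval1, hroot1, hyield1, hsize1⟩ := h1 (Φ2 s) hroot2 hval2
  refine ⟨hval1, hroot1, ?_, by omega⟩
  rw [hyield1, hyield2]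
  simp

lemma seg_spec : ∀ (n : ℕ) (t : PTree T g.NT) (B : g.NT), t.Valid g →
    t.root = Symbol.nonterminal B → n + 1 ≤ t.depth →
    ∃ C u v Φ, (spine n t).Valid g ∧ (spine n t).root = Symbol.nonterminal C ∧
      (spine n t).depth + n = t.depth ∧
      t.yield = u ++ (spine n t).yield ++ v ∧
      g.Derives [Symbol.nonterminal B]
        (u.map Symbol.terminal ++ [Symbol.nonterminal C] ++ v.map Symbol.terminal) ∧
      CtxOK g Φ B C u v t (spine n t) ∧ (spine n t).size + n ≤ t.size := by
  intro n
  induction n with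
  | zero =>
    intro t B hv hroot _
    have h0 : spine 0 t = t := rfl
    rw [h0]
    exact ⟨B, [], [], id, hv, hroot, rfl, by simp, by simpa using Relation.ReflTransGen.refl,
      ctxOK_id B t hroot, by simp⟩
  | succ n ih =>
    intro t B hv hroot hd
    obtain ⟨C, u1, v1, Φ1, hval1, hroot1, hdepth1, hyield1, hder1, hctx1, hsize1⟩ :=
      step_spec hv hroot (by omega)
    obtain ⟨D, u2, v2, Φ2, hval2, hroot2, hdepth2, hyield2, hder2, hctx2, hsize2⟩ :=
      ih (stepD t) C hval1 hroot1 (by omega)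
    have hspine : spine (n + 1) t = spine n (stepD t) := by
      simp [spine, Function.iterate_succ_apply]
    rw [hspine]
    refine ⟨D, u1 ++ u2, v2 ++ v1, Φ1 ∘ Φ2, hval2, hroot2, by omega, ?_, ?_, ?_, by omega⟩
    · rw [hyield1, hyield2]; simp
    · have h2' := (hder2.append_left [Symbol.nonterminal C]).append_right
        (v1.map Symbol.terminal)
      have h2'' := (hder2.append_left (u1.map Symbol.terminal)).append_right
        ((v1.map Symbol.terminal))
      -- [B] ⇒* u1 [C] v1 ⇒* u1 (u2 [D] v2) v1
      have hC : g.Derives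
          (u1.map Symbol.terminal ++ [Symbol.nonterminal C] ++ v1.map Symbol.terminal)
          (u1.map Symbol.terminal ++ (u2.map Symbol.terminal ++ [Symbol.nonterminal D]
            ++ v2.map Symbol.terminal) ++ v1.map Symbol.terminal) := by
        have := (hder2.append_left (u1.map Symbol.terminal)).append_right
          (v1.map Symbol.terminal)
        simpa [List.append_assoc] using this
      have := hder1.trans hC
      simpa [List.append_assoc] using this
    · have := ctxOK_comp hctx1 hctx2
      simpa [List.append_assoc] using this


lemma spine_comp (i k : ℕ) (t : PTree T g.NT) :
    spine k (spine i t) = spine (k + i) t := by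
  simp [spine, ← Function.iterate_add_apply]

lemma pump_tree : ∀ (n : ℕ) (t : PTree T g.NT) (B : g.NT), t.size ≤ n → t.Valid g →
    t.root = Symbol.nonterminal B →
    mlen g ^ ((nts g).card + 2) < t.yield.length →
    ∃ A u v w x y, t.yield = u ++ v ++ w ++ x ++ y ∧ v ++ x ≠ [] ∧
      (v ++ w ++ x).length ≤ mlen g ^ ((nts g).card + 2) ∧
      g.Derives [Symbol.nonterminal B]
        (u.map Symbol.terminal ++ [Symbol.nonterminal A] ++ y.map Symbol.terminal) ∧
      g.Derives [Symbol.nonterminal A]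
        (v.map Symbol.terminal ++ [Symbol.nonterminal A] ++ x.map Symbol.terminal) ∧
      g.Derives [Symbol.nonterminal A] (w.map Symbol.terminal) := by
  intro n
  induction n with
  | zero =>
    intro t B hsize
    have := PTree.size_pos t
    omega
  | succ n ih =>
    intro t B hsize hval hroot hlong
    set K := (nts g).card with hK
    have hM : 1 ≤ mlen g := by simp [mlen]
    -- the tree is deep
    have hdeep : K + 3 ≤ t.depth := by
      by_contra hcon
      have h1 : t.yield.length ≤ mlen g ^ t.depth := yield_len_le_pow_depth hval
      have h2 : mlen g ^ t.depth ≤ mlen g ^ (K + 2) :=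
        Nat.pow_le_pow_right hM (by omega)
      omega
    -- descend to depth K+2
    obtain ⟨B1, u0, y0, Φ0, hval1, hroot1, hdepth1, hyield0, hder0, hctx0, -⟩ :=
      seg_spec (t.depth - (K + 2)) t B hval hroot (by omega)
    set t1 := spine (t.depth - (K + 2)) t with ht1
    have hd1 : t1.depth = K + 2 := by omega
    have hylen1 : t1.yield.length ≤ mlen g ^ (K + 2) := by
      have := yield_len_le_pow_depth hval1
      rwa [hd1] at this
    -- labels along the spine of t1
    have hfun : ∀ i : Fin (K + 2), ∃ C : g.NT,
        (spine i t1).root = Symbol.nonterminal C ∧ C ∈ nts g := by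
      intro i
      obtain ⟨C, u', v', Φ', hv', hr', -, -, -, -, -⟩ :=
        seg_spec i t1 B1 hval1 hroot1 (by have := i.2; omega)
      exact ⟨C, hr', root_mem_nts hv' hr'⟩
    choose f hf1 hf2 using hfun
    have hcard : (nts g).card < (Finset.univ : Finset (Fin (K + 2))).card := by
      simp [← hK]
    obtain ⟨i, -, j, -, hij, hfij⟩ :=
      Finset.exists_ne_map_eq_of_card_lt_of_maps_to hcard (fun i _ => hf2 i)
    -- wlog i < j
    have hijv : (i : ℕ) ≠ (j : ℕ) := fun h => hij (Fin.ext h)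
    wlog hlt : (i : ℕ) < (j : ℕ) generalizing i j
    · exact this j i hij.symm hfij.symm (fun h => hij (Fin.ext h.symm)) (by omega)
    -- segments
    obtain ⟨C, u1, v1, Φ1, hvali, hrooti, hdepthi, hyieldi, hder1, hctx1, -⟩ :=
      seg_spec i t1 B1 hval1 hroot1 (by have := i.2; omega)
    set ti := spine i t1 with hti
    have hCfi : C = f i := by
      have h1 := hf1 i
      rw [← hti, hrooti] at h1
      injection h1
    obtain ⟨D, u2, v2, Φ2, hvalj, hrootj, hdepthj, hyieldj, hder2, hctx2, hsizej⟩ :=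
      seg_spec ((j : ℕ) - i) ti C hvali hrooti (by have := j.2; omega)
    have hspj : spine ((j : ℕ) - i) ti = spine j t1 := by
      rw [hti, spine_comp]
      congr 1
      omega
    set tj := spine ((j : ℕ) - i) ti with htj
    have hDfj : D = f j := by
      have h1 := hf1 j
      rw [← hspj, hrootj] at h1
      injection h1
    have hDC : D = C := by rw [hDfj, hCfi, hfij]
    rw [hDC] at hrootj hder2
    have hsizelt : tj.size < ti.size := by omega
    by_cases hempty : u2 ++ v2 = []
    · -- empty sandwich: surgery, recurse on a smaller tree
      have hu2 : u2 = [] := by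
        cases List.append_eq_nil_iff.1 hempty; assumption
      have hv2 : v2 = [] := by
        cases List.append_eq_nil_iff.1 hempty; assumption
      subst hu2 hv2
      simp only [List.nil_append, List.append_nil] at hyieldj
      obtain ⟨hvΦ1, hrΦ1, hyΦ1, hsΦ1⟩ := hctx1 tj hrootj hvalj
      obtain ⟨hvΦ0, hrΦ0, hyΦ0, hsΦ0⟩ := hctx0 (Φ1 tj) hrΦ1 hvΦ1
      have hy' : (Φ0 (Φ1 tj)).yield = t.yield := by
        rw [hyΦ0, hyΦ1, ← hyieldj, ← hyieldi, ← hyield0]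
      have hs' : (Φ0 (Φ1 tj)).size ≤ n := by omega
      obtain ⟨A, u, v, w, x, y, h1, h2, h3, h4, h5, h6⟩ :=
        ih (Φ0 (Φ1 tj)) B hs' hvΦ0 hrΦ0 (by rwa [hy'])
      exact ⟨A, u, v, w, x, y, by rwa [hy'] at h1, h2, h3, h4, h5, h6⟩
    · -- nonempty sandwich: we found the pump
      refine ⟨C, u0 ++ u1, u2, tj.yield, v2, v1 ++ y0, ?_, hempty, ?_, ?_, hder2, ?_⟩
      · rw [hyield0, hyieldi, hyieldj]
        simp [List.append_assoc]
      · have h1 : (u2 ++ tj.yield ++ v2).length = ti.yield.length := by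
          rw [hyieldj]
        have h2 : ti.yield.length ≤ t1.yield.length := by
          rw [hyieldi]
          simp only [List.length_append]
          omega
        omega
      · -- compose hder0 and hder1
        have hC : g.Derives
            (u0.map Symbol.terminal ++ [Symbol.nonterminal B1] ++ y0.map Symbol.terminal)
            (u0.map Symbol.terminal ++ (u1.map Symbol.terminal ++ [Symbol.nonterminal C]
              ++ v1.map Symbol.terminal) ++ y0.map Symbol.terminal) := by
          have := (hder1.append_left (u0.map Symbol.terminal)).append_right
            (y0.map Symbol.terminal)
          simpa [List.append_assoc] using this
        have := hder0.trans hC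
        simpa [List.append_assoc] using this
      · have := hvalj.derives
        rwa [hrootj] at this


lemma iterate_sandwich {A : g.NT} {v x : List T}
    (h : g.Derives [Symbol.nonterminal A]
      (v.map Symbol.terminal ++ [Symbol.nonterminal A] ++ x.map Symbol.terminal)) :
    ∀ k : ℕ, g.Derives [Symbol.nonterminal A]
      ((List.replicate k v).flatten.map Symbol.terminal ++ [Symbol.nonterminal A] ++
        (List.replicate k x).flatten.map Symbol.terminal) := by
  intro k
  induction k with
  | zero => simpa using Relation.ReflTransGen.refl
  | succ k ihk =>
    refine h.trans ?_
    have hinner := (ihk.append_left (v.map Symbol.terminal)).append_right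
      (x.map Symbol.terminal)
    rw [List.replicate_succ, List.replicate_succ' (n := k) (a := x)]
    simp only [List.flatten_cons, List.flatten_append, List.flatten_cons, List.flatten_nil,
      List.append_nil, List.map_append]
    simpa [List.append_assoc] using hinner

lemma cfg_pumping (g : ContextFreeGrammar.{0} T) (z : List T) (hz : z ∈ g.language)
    (hlong : mlen g ^ ((nts g).card + 2) < z.length) :
    ∃ u v w x y : List T, z = u ++ v ++ w ++ x ++ y ∧ v ++ x ≠ [] ∧
      (v ++ w ++ x).length ≤ mlen g ^ ((nts g).card + 2) ∧
      ∀ k : ℕ, u ++ (List.replicate k v).flatten ++ w ++ (List.replicate k x).flatten ++ y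
        ∈ g.language := by
  rw [ContextFreeGrammar.mem_language_iff] at hz
  obtain ⟨c, hroots, hyield, hvalid⟩ := derives_to_forest hz
  obtain ⟨t, rfl⟩ : ∃ t, c = [t] := by
    cases c with
    | nil => simp at hroots
    | cons t rest =>
      cases rest with
      | nil => exact ⟨t, rfl⟩
      | cons a l => simp at hroots
  have hroott : t.root = Symbol.nonterminal g.initial := by
    simpa using hroots
  have hyt : t.yield = z := by
    simpa [PTree.yieldF] using hyield
  have hvt : t.Valid g := hvalid t (by simp)
  obtain ⟨A, u, v, w, x, y, h1, h2, h3, h4, h5, h6⟩ :=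
    pump_tree t.size t g.initial le_rfl hvt hroott (by rwa [hyt])
  refine ⟨u, v, w, x, y, by rw [← hyt, h1], h2, h3, ?_⟩
  intro k
  rw [ContextFreeGrammar.mem_language_iff]
  have hstep2 : g.Derives
      (u.map Symbol.terminal ++ [Symbol.nonterminal A] ++ y.map Symbol.terminal)
      (u.map Symbol.terminal ++ ((List.replicate k v).flatten.map Symbol.terminal ++
        [Symbol.nonterminal A] ++ (List.replicate k x).flatten.map Symbol.terminal) ++
        y.map Symbol.terminal) := by
    have := ((iterate_sandwich h5 k).append_left (u.map Symbol.terminal)).append_right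
      (y.map Symbol.terminal)
    simpa [List.append_assoc] using this
  have hstep3 : g.Derives
      (u.map Symbol.terminal ++ ((List.replicate k v).flatten.map Symbol.terminal ++
        [Symbol.nonterminal A] ++ (List.replicate k x).flatten.map Symbol.terminal) ++
        y.map Symbol.terminal)
      (u.map Symbol.terminal ++ ((List.replicate k v).flatten.map Symbol.terminal ++
        w.map Symbol.terminal ++ (List.replicate k x).flatten.map Symbol.terminal) ++
        y.map Symbol.terminal) := by
    have h6' := ((h6.append_left ((List.replicate k v).flatten.map Symbol.terminal)).append_right
      ((List.replicate k x).flatten.map Symbol.terminal)).append_left (u.map Symbol.terminal)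
    have := h6'.append_right (y.map Symbol.terminal)
    simpa [List.append_assoc] using this
  have := (h4.trans hstep2).trans hstep3
  simpa [List.append_assoc] using this

end CFPump


namespace L5aux

def zz (p : ℕ) : List Ab5 :=
  List.replicate p Ab5.abar ++ List.replicate p Ab5.bbar ++ [Ab5.sep] ++
    List.replicate p Ab5.a ++ List.replicate p Ab5.b

lemma zz_length (p : ℕ) : (zz p).length = 4 * p + 1 := by
  simp [zz]; omega

lemma zz_get (p j : ℕ) (h : j < (zz p).length) :
    (zz p)[j] = if j < p then Ab5.abar else if j < 2*p then Ab5.bbar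
      else if j = 2*p then Ab5.sep else if j ≤ 3*p then Ab5.a else Ab5.b := by
  have h' := h
  rw [zz_length] at h'
  simp only [zz, List.append_assoc] at h ⊢
  have hL : ∀ q c, (List.replicate q (c : Ab5)).length = q := fun q c => List.length_replicate ..
  rcases Nat.lt_or_ge j p with h1 | h1
  · rw [List.getElem_append_left (by simp only [List.length_replicate]; omega),
      List.getElem_replicate, if_pos h1]
  · rw [List.getElem_append_right (by simp only [List.length_replicate]; omega)]
    simp only [List.length_replicate]
    rcases Nat.lt_or_ge j (2*p) with h2 | h2
    · rw [List.getElem_append_left (by simp only [List.length_replicate]; omega),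
        List.getElem_replicate, if_neg (by omega), if_pos (by omega)]
    · rw [List.getElem_append_right (by simp only [List.length_replicate]; omega)]
      simp only [List.length_replicate]
      rcases Nat.eq_or_lt_of_le h2 with h3 | h3
      · rw [List.getElem_append_left (by simp only [List.length_singleton]; omega)]
        simp only [List.getElem_singleton]
        rw [if_neg (by omega), if_neg (by omega), if_pos (by omega)]
      · rw [List.getElem_append_right (by simp only [List.length_singleton]; omega)]
        simp only [List.length_singleton]
        rcases Nat.lt_or_ge j (3*p+1) with h4 | h4
        · rw [List.getElem_append_left (by simp only [List.length_replicate]; omega),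
            List.getElem_replicate,
            if_neg (by omega), if_neg (by omega), if_neg (by omega), if_pos (by omega)]
        · rw [List.getElem_append_right (by simp only [List.length_replicate]; omega),
            List.getElem_replicate,
            if_neg (by omega), if_neg (by omega), if_neg (by omega), if_neg (by omega)]

lemma window (p : ℕ) (u W y : List Ab5) (hz : zz p = u ++ W ++ y) (hW : W.length ≤ p) :
    (Ab5.abar ∈ W → Ab5.a ∉ W ∧ Ab5.b ∉ W) ∧
    (Ab5.b ∈ W → Ab5.abar ∉ W ∧ Ab5.bbar ∉ W) := by
  have hlen : (zz p).length = u.length + W.length + y.length := by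
    rw [hz]; simp; omega
  have hidx : ∀ (i : ℕ) (hi : i < W.length),
      ∃ (hj : u.length + i < (zz p).length), (zz p)[u.length + i] = W[i] := by
    intro i hi
    have hj : u.length + i < (zz p).length := by omega
    refine ⟨hj, ?_⟩
    rw [List.getElem_of_eq hz hj]
    simp only [List.append_assoc]
    rw [List.getElem_append_right (by omega)]
    simp only [Nat.add_sub_cancel_left]
    rw [List.getElem_append_left hi]
  have habar : ∀ i (hi : i < W.length), W[i] = Ab5.abar → u.length + i < p := by
    intro i hi hc
    obtain ⟨hj, he⟩ := hidx i hi
    rw [hc, zz_get p _ hj] at he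
    split_ifs at he <;> first | omega | simp at he
  have hbbar : ∀ i (hi : i < W.length), W[i] = Ab5.bbar → p ≤ u.length + i ∧ u.length + i < 2*p := by
    intro i hi hc
    obtain ⟨hj, he⟩ := hidx i hi
    rw [hc, zz_get p _ hj] at he
    split_ifs at he <;> first | omega | simp at he
  have ha : ∀ i (hi : i < W.length), W[i] = Ab5.a → 2*p < u.length + i := by
    intro i hi hc
    obtain ⟨hj, he⟩ := hidx i hi
    rw [hc, zz_get p _ hj] at he
    split_ifs at he <;> first | omega | simp at he
  have hb : ∀ i (hi : i < W.length), W[i] = Ab5.b → 3*p < u.length + i := by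
    intro i hi hc
    obtain ⟨hj, he⟩ := hidx i hi
    rw [hc, zz_get p _ hj] at he
    split_ifs at he <;> first | omega | simp at he
  constructor
  · intro hmem
    obtain ⟨i, hi, hWi⟩ := List.getElem_of_mem hmem
    have h1 := habar i hi hWi
    constructor
    · intro hmem2
      obtain ⟨k, hk, hWk⟩ := List.getElem_of_mem hmem2
      have h2 := ha k hk hWk
      omega
    · intro hmem2
      obtain ⟨k, hk, hWk⟩ := List.getElem_of_mem hmem2
      have h2 := hb k hk hWk
      omega
  · intro hmem
    obtain ⟨i, hi, hWi⟩ := List.getElem_of_mem hmem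
    have h1 := hb i hi hWi
    constructor
    · intro hmem2
      obtain ⟨k, hk, hWk⟩ := List.getElem_of_mem hmem2
      have h2 := habar k hk hWk
      omega
    · intro hmem2
      obtain ⟨k, hk, hWk⟩ := List.getElem_of_mem hmem2
      have h2 := hbbar k hk hWk
      omega

lemma count_flatten_replicate (k : ℕ) (v : List Ab5) (c : Ab5) :
    ((List.replicate k v).flatten).count c = k * v.count c := by
  induction k with
  | zero => simp
  | succ k ih => simp [List.replicate_succ, List.count_append, ih]; ring

lemma length_eq_counts (l : List Ab5) :
    l.length = l.count .abar + l.count .bbar + l.count .sep + l.count .a + l.count .b := by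
  induction l with
  | nil => simp
  | cons c l ih => cases c <;> simp [List.count_cons, ih] <;> omega

lemma mem_L5_count {w : List Ab5} (h : w ∈ L5) :
    w.count .sep = 1 ∧ w.count .a ≤ w.count .abar ∧ w.count .b ≤ w.count .bbar := by
  obtain ⟨n1, m1, n2, m2, h1, h2, rfl⟩ := h
  simp [List.count_append, List.count_replicate]
  omega

lemma zz_counts (p : ℕ) : (zz p).count .abar = p ∧ (zz p).count .bbar = p ∧
    (zz p).count .sep = 1 ∧ (zz p).count .a = p ∧ (zz p).count .b = p := by
  simp [zz, List.count_append, List.count_replicate]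

lemma zz_mem (p : ℕ) : zz p ∈ L5 := ⟨p, p, p, p, le_rfl, le_rfl, rfl⟩

end L5aux


/-- `L5` is not context-free. -/
theorem L5_not_contextFree : ¬ L5.IsContextFree := by
  rintro ⟨g, hg⟩
  set p := CFPump.mlen g ^ ((CFPump.nts g).card + 2) with hp
  have hM : 1 ≤ CFPump.mlen g := by simp [CFPump.mlen]
  have hp1 : 1 ≤ p := Nat.one_le_pow _ _ (by omega)
  have hzmem : L5aux.zz p ∈ g.language := by rw [hg]; exact L5aux.zz_mem p
  have hlong : p < (L5aux.zz p).length := by rw [L5aux.zz_length]; omega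
  obtain ⟨u, v, w, x, y, hsplit, hvx, hlen, hpump⟩ := CFPump.cfg_pumping g _ hzmem hlong
  obtain ⟨hcabar, hcbbar, hcsep, hca, hcb⟩ := L5aux.zz_counts p
  rw [hsplit] at hcabar hcbbar hcsep hca hcb
  simp only [List.count_append] at hcabar hcbbar hcsep hca hcb
  -- the two pumped words
  have hmem0 : u ++ w ++ y ∈ L5 := by
    have h := hpump 0
    rw [hg] at h
    simpa using h
  have h2v : ∀ (l : List Ab5), (List.replicate 2 l).flatten = l ++ l := by
    intro l
    show (List.replicate (1+1) l).flatten = l ++ l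
    simp [List.replicate_add]
  have hmem2 : u ++ (v ++ v) ++ w ++ (x ++ x) ++ y ∈ L5 := by
    have h := hpump 2
    rw [hg, h2v, h2v] at h
    exact h
  obtain ⟨h0sep, h0a, h0b⟩ := L5aux.mem_L5_count hmem0
  obtain ⟨h2sep, h2a, h2b⟩ := L5aux.mem_L5_count hmem2
  simp only [List.count_append] at h0sep h0a h0b h2sep h2a h2b
  rw [← hp] at hlen
  clear_value p
  clear hp hM
  -- window facts
  have hzW : L5aux.zz p = u ++ (v ++ w ++ x) ++ y := by
    rw [hsplit]; simp [List.append_assoc]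
  have hwin := L5aux.window p u (v ++ w ++ x) y hzW hlen
  have hmemW : ∀ c : Ab5, c ∈ v ∨ c ∈ x → c ∈ v ++ w ++ x := by
    intro c hc
    rcases hc with hc | hc <;> simp [List.mem_append, hc]
  -- v and x contain no separator
  have hsep0 : v.count .sep = 0 ∧ x.count .sep = 0 := by omega
  by_cases habar : 0 < v.count .abar + x.count .abar
  · -- ā gets pumped: then a and b do not occur in the window
    have habarW : Ab5.abar ∈ v ++ w ++ x := by
      apply hmemW
      rcases Nat.lt_or_ge 0 (v.count .abar) with h | h
      · exact Or.inl (List.count_pos_iff.1 h)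
      · exact Or.inr (List.count_pos_iff.1 (by omega))
    obtain ⟨hnoA, hnoB⟩ := hwin.1 habarW
    have hva : v.count .a = 0 := List.count_eq_zero.2 (fun hm => hnoA (hmemW _ (Or.inl hm)))
    have hxa : x.count .a = 0 := List.count_eq_zero.2 (fun hm => hnoA (hmemW _ (Or.inr hm)))
    omega
  · by_cases hbb : 0 < v.count .b + x.count .b
    · -- b gets pumped: then ā and b̄ do not occur in the window
      have hbW : Ab5.b ∈ v ++ w ++ x := by
        apply hmemW
        rcases Nat.lt_or_ge 0 (v.count .b) with h | h
        · exact Or.inl (List.count_pos_iff.1 h)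
        · exact Or.inr (List.count_pos_iff.1 (by omega))
      obtain ⟨hnoAbar, hnoBbar⟩ := hwin.2 hbW
      have hvbb : v.count .bbar = 0 :=
        List.count_eq_zero.2 (fun hm => hnoBbar (hmemW _ (Or.inl hm)))
      have hxbb : x.count .bbar = 0 :=
        List.count_eq_zero.2 (fun hm => hnoBbar (hmemW _ (Or.inr hm)))
      omega
    · -- only b̄ and a can get pumped
      have hlvx : 0 < v.length + x.length := by
        have h := List.length_pos_iff.2 hvx
        simpa using h
      have hcounts := L5aux.length_eq_counts (v ++ x)
      simp only [List.count_append, List.length_append] at hcounts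
      by_cases hbbar : 0 < v.count .bbar + x.count .bbar
      · omega
      · omega
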